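/- Let $A$ be a Noetherian ring, $I$ an ideal of $A$, and $M$ an $A$-module (not necessarily finitely generated). Let $\Gamma_I(M) = \{m \in M \mid I^s m = 0 \text{ for some } s \geq 0\}$ be the $I$-torsion submodule of $M$. Then the set of associated primes of the quotient $M/\Gamma_I(M)$ equals $\{P \in \operatorname{Ass}_A M \mid P \not\supseteq I\}$. -/

import Mathlib

/-- The `I`-torsion submodule `Γ_I(M) = { x ∈ M ∣ Iˢ x = 0 for some s ≥ 0 }`. -/
def torsionByIdeal {A : Type*} [CommRing A] (I : Ideal A)
    (M : Type*) [AddCommGroup M] [Module A M] : Submodule A M where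
  carrier := {x | ∃ s : ℕ, ∀ a ∈ I ^ s, a • x = 0}
  zero_mem' := ⟨0, fun a _ => smul_zero a⟩
  add_mem' := by
    rintro x y ⟨s, hs⟩ ⟨t, ht⟩
    refine ⟨max s t, fun a ha => ?_⟩
    rw [smul_add, hs a (Ideal.pow_le_pow_right (le_max_left s t) ha),
      ht a (Ideal.pow_le_pow_right (le_max_right s t) ha), add_zero]
  smul_mem' := by
    rintro r x ⟨s, hs⟩
    exact ⟨s, fun a ha => by rw [smul_comm, hs a ha, smul_zero]⟩

lemma mem_torsionByIdeal {A : Type*} [CommRing A] {I : Ideal A}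
    {M : Type*} [AddCommGroup M] [Module A M] {x : M} :
    x ∈ torsionByIdeal I M ↔ ∃ s : ℕ, ∀ a ∈ I ^ s, a • x = 0 := Iff.rfl

/-- Uniformity lemma: for a finitely generated ideal `J` all whose elements move `x`
into the `I`-torsion submodule, a single power of `I` works. -/
lemma torsion_unif {A : Type*} [CommRing A] (I : Ideal A)
    {M : Type*} [AddCommGroup M] [Module A M] {J : Ideal A} (hJ : J.FG) {x : M}
    (h : ∀ a ∈ J, ∃ t : ℕ, ∀ b ∈ I ^ t, b • a • x = 0) :
    ∃ s : ℕ, ∀ a ∈ J, ∀ b ∈ I ^ s, b • a • x = 0 := by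
  obtain ⟨T, hT⟩ := hJ
  choose t ht using h
  have hmem : ∀ a ∈ T, a ∈ J := fun a ha => hT ▸ Submodule.subset_span ha
  refine ⟨T.attach.sup (fun a => t a (hmem a a.2)), fun a ha => ?_⟩
  rw [← hT] at ha
  induction ha using Submodule.span_induction with
  | mem a haT =>
      intro b hb
      exact ht a (hmem a haT)  b
        (Ideal.pow_le_pow_right (Finset.le_sup (Finset.mem_attach T ⟨a, haT⟩)) hb)
  | zero => intro b _; rw [zero_smul, smul_zero]
  | add a₁ a₂ _ _ h₁ h₂ =>
      intro b hb
      rw [add_smul, smul_add, h₁ b hb, h₂ b hb, add_zero]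
  | smul c a _ h₁ =>
      intro b hb
      rw [smul_assoc, smul_comm b c, h₁ b hb, smul_zero]

lemma not_pow_le {A : Type*} [CommRing A] {I P : Ideal A} (hP : P.IsPrime)
    (hIP : ¬ I ≤ P) (s : ℕ) : ¬ I ^ s ≤ P := by
  rcases Nat.eq_zero_or_pos s with rfl | hs
  · rw [pow_zero, Ideal.one_eq_top, top_le_iff]
    exact hP.ne_top
  · rw [Ideal.IsPrime.pow_le_iff hs.ne']
    exact hIP

/-- **Lemma.**  Let `A` be a Noetherian ring, `I` an ideal of `A` and `M` an `A`-module (not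
necessarily finitely generated).  Then the associated primes of `M / Γ_I(M)` are exactly the
associated primes of `M` that do not contain `I`. -/
theorem associatedPrimes_quotient_torsion
    {A : Type*} [CommRing A] [IsNoetherianRing A] (I : Ideal A)
    (M : Type*) [AddCommGroup M] [Module A M] :
    associatedPrimes A (M ⧸ torsionByIdeal I M) =
      {P ∈ associatedPrimes A M | ¬ I ≤ P} := by
  set N := torsionByIdeal I M with hN
  ext P
  simp only [Set.mem_setOf_eq, associatedPrimes, Set.mem_sep_iff, isAssociatedPrime_iff]
  constructor
  · rintro ⟨hP, xb, hxb⟩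
    obtain ⟨x, rfl⟩ := Submodule.Quotient.mk_surjective N xb
    -- membership in the annihilator of the cyclic module
    have hann : ∀ c : A, c ∈ P ↔ Submodule.Quotient.mk (c • x) = (0 : M ⧸ N) := by
      intro c
      rw [hxb, Submodule.mem_colon_singleton, Submodule.mem_bot,
        ← Submodule.Quotient.mk_smul]
    have hannN : ∀ c : A, c ∈ P ↔ c • x ∈ N := by
      intro c; rw [hann c, Submodule.Quotient.mk_eq_zero]
    -- first: ¬ I ≤ P
    have hIP : ¬ I ≤ P := by
      intro hle
      obtain ⟨s, hs⟩ := torsion_unif I (IsNoetherian.noetherian I)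
        (x := x) (fun a ha => (hannN a).mp (hle ha))
      have hxN : x ∈ N := by
        refine ⟨s + 1, fun c hc => ?_⟩
        rw [pow_succ] at hc
        exact Submodule.mul_induction_on hc
          (fun b hb a ha => by rw [mul_smul]; exact hs a ha b hb)
          (fun c₁ c₂ h₁ h₂ => by rw [add_smul, h₁, h₂, add_zero])
      have : Submodule.Quotient.mk x = (0 : M ⧸ N) := (Submodule.Quotient.mk_eq_zero N).mpr hxN
      rw [this] at hxb
      exact hP.ne_top (hxb.trans (eq_top_iff.mpr fun c _ => by
        rw [Submodule.mem_colon_singleton, smul_zero]; exact Submodule.zero_mem _))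
    refine ⟨⟨hP, ?_⟩, hIP⟩
    -- P is an associated prime of M
    obtain ⟨s, hs⟩ := torsion_unif I (IsNoetherian.noetherian P)
      (x := x) (fun a ha => (hannN a).mp ha)
    obtain ⟨b, hbI, hbP⟩ := SetLike.not_le_iff_exists.mp (not_pow_le hP hIP s)
    refine ⟨b • x, le_antisymm ?_ ?_⟩
    · intro c hc
      rw [Submodule.mem_colon_singleton, Submodule.mem_bot, smul_comm]
      exact hs c hc b hbI
    · intro c hc
      rw [Submodule.mem_colon_singleton, Submodule.mem_bot] at hc
      have : (c * b) • x = 0 := by rw [mul_smul]; exact hc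
      have hcb : c * b ∈ P := (hann (c * b)).mpr (by rw [this, Submodule.Quotient.mk_zero])
      exact (hP.mem_or_mem hcb).resolve_right hbP
  · rintro ⟨⟨hP, x, hx⟩, hIP⟩
    refine ⟨hP, Submodule.Quotient.mk x, le_antisymm ?_ ?_⟩
    · intro c hc
      rw [Submodule.mem_colon_singleton, Submodule.mem_bot, ← Submodule.Quotient.mk_smul,
        Submodule.Quotient.mk_eq_zero]
      have : c • x = 0 := by
        rw [hx, Submodule.mem_colon_singleton, Submodule.mem_bot] at hc; exact hc
      rw [this]; exact N.zero_mem
    · intro c hc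
      rw [Submodule.mem_colon_singleton, Submodule.mem_bot, ← Submodule.Quotient.mk_smul,
        Submodule.Quotient.mk_eq_zero] at hc
      obtain ⟨s, hs⟩ := hc
      obtain ⟨b, hbI, hbP⟩ := SetLike.not_le_iff_exists.mp (not_pow_le hP hIP s)
      have hcb : b * c ∈ P := by
        rw [hx, Submodule.mem_colon_singleton, Submodule.mem_bot, mul_smul]
        exact hs b hbI
      exact (hP.mem_or_mem hcb).resolve_left hbP
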